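/- Let μ be an atomless probability measure on ℝ and let S_1,...,S_N be independent random variables each with law μ (i.e., the sample ω = (S_1,...,S_N) is distributed according to the N-fold product measure μ^N). Fix ε ∈ (0,1), β ∈ (0,1), and a natural number k < N satisfying ∑_{i=0}^{k} C(N,i) · ε^i · (1-ε)^{N-i} ≤ β. Define the calibration level δ(ω) as the (N-k)-th smallest value among S_1(ω),...,S_N(ω) (equivalently, the (N-k)/N empirical quantile of the sample). Then, with probability at least 1-β over the draw of the sample ω ~ μ^N, it holds that μ({ s ∈ ℝ : s > δ(ω) }) ≤ ε. -/

import Mathlib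

open MeasureTheory ProbabilityTheory Filter Topology

lemma cdf_cont (μ : Measure ℝ) [IsProbabilityMeasure μ] [NullSingletonClass μ] : Continuous (cdf μ) := by
  rw [continuous_iff_continuousAt]
  intro x
  have hm := monotone_cdf (μ := μ)
  rw [hm.continuousAt_iff_leftLim_eq_rightLim]
  have hr : Function.rightLim (cdf μ) x = cdf μ x :=
    hm.continuousWithinAt_Ioi_iff_rightLim_eq.mp
      (((cdf μ).right_continuous x).mono Set.Ioi_subset_Ici_self)
  have hl : Function.leftLim (cdf μ) x = cdf μ x := by
    have h0 : (cdf μ).measure {x} = 0 := by rw [measure_cdf]; exact measure_singleton x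
    rw [StieltjesFunction.measure_singleton, ENNReal.ofReal_eq_zero] at h0
    have h1 := hm.leftLim_le (le_refl x)
    linarith
  rw [hl, hr]

lemma exists_quantile (μ : Measure ℝ) [IsProbabilityMeasure μ] [NullSingletonClass μ] {ε : ℝ}
    (hε : ε ∈ Set.Ioo (0:ℝ) 1) :
    ∃ t : ℝ, μ (Set.Ioi t) = ENNReal.ofReal ε ∧ μ (Set.Ici t) = ENNReal.ofReal ε := by
  obtain ⟨a, ha⟩ := ((tendsto_cdf_atBot μ).eventually_lt_const
    (by linarith [hε.2] : (0:ℝ) < 1 - ε)).exists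
  obtain ⟨b, hb⟩ := ((tendsto_cdf_atTop μ).eventually_const_lt
    (by linarith [hε.1] : 1 - ε < 1)).exists
  obtain ⟨t, ht⟩ := intermediate_value_univ a b (cdf_cont μ) ⟨le_of_lt ha, le_of_lt hb⟩
  have hiic : μ (Set.Iic t) = ENNReal.ofReal (1 - ε) := by
    rw [← ofReal_cdf μ t, ht]
  have hioi : μ (Set.Ioi t) = ENNReal.ofReal ε := by
    have h := measure_compl (measurableSet_Iic (a := t)) (measure_ne_top μ _)
    rw [Set.compl_Iic, hiic, measure_univ] at h
    rw [h]
    refine ENNReal.sub_eq_of_eq_add ENNReal.ofReal_ne_top ?_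
    rw [← ENNReal.ofReal_add hε.1.le (by linarith [hε.2])]
    norm_num
  refine ⟨t, hioi, ?_⟩
  rw [← measure_congr (Ioi_ae_eq_Ici (μ := μ) (a := t)), hioi]

lemma sorted_ge {N k : ℕ} (hk : k < N) (f : Fin N → ℝ) (t : ℝ)
    (h : k + 1 ≤ (Finset.univ.filter (fun i => t ≤ f i)).card) :
    t ≤ f (Tuple.sort f ⟨N - k - 1, by omega⟩) := by
  by_contra hlt
  push_neg at hlt
  set σ := Tuple.sort f with hσ
  have hmono := Tuple.monotone_sort f
  have hsub : Finset.univ.filter (fun j => t ≤ f (σ j)) ⊆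
      Finset.Ioi (⟨N - k - 1, by omega⟩ : Fin N) := by
    intro j hj
    rw [Finset.mem_filter] at hj
    rw [Finset.mem_Ioi]
    by_contra hle
    push_neg at hle
    have h1 : f (σ j) ≤ f (σ ⟨N - k - 1, by omega⟩) := hmono hle
    exact absurd (le_trans hj.2 h1) (not_le.mpr hlt)
  have hcard1 : (Finset.univ.filter (fun j => t ≤ f (σ j))).card ≤ k := by
    have h2 := Finset.card_le_card hsub
    rw [Fin.card_Ioi] at h2
    simp only at h2
    omega
  have hcard2 : (Finset.univ.filter (fun j => t ≤ f (σ j))).card =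
      (Finset.univ.filter (fun i => t ≤ f i)).card := by
    apply Finset.card_bij (fun j _ => σ j)
    · intro a ha
      rw [Finset.mem_filter] at ha ⊢
      exact ⟨Finset.mem_univ _, ha.2⟩
    · intro a _ b _ hab
      exact σ.injective hab
    · intro b hb
      rw [Finset.mem_filter] at hb
      exact ⟨σ.symm b, by rw [Finset.mem_filter]; simpa using hb.2, by simp⟩
  omega

/-- Conformal calibration guarantee (Theorem 1 of the paper, abstract form): let `μ` be an
atomless probability measure on `ℝ` (the law of the conformal score), let `k < N` satisfy
`∑_{i=0}^{k} C(N,i) ε^i (1-ε)^{N-i} ≤ β`, and let the calibration level `δ(ω)` be the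
`(N-k)`-th smallest value of the i.i.d. sample `ω = (S_1, ..., S_N) ~ μ^N`. Then with
probability at least `1-β` over the draw of the sample, `μ({s : s > δ(ω)}) ≤ ε`. -/
theorem conformal_calibration (μ : Measure ℝ) [IsProbabilityMeasure μ] [NullSingletonClass μ]
    (N : ℕ) (ε β : ℝ) (hε : ε ∈ Set.Ioo (0 : ℝ) 1) (hβ : β ∈ Set.Ioo (0 : ℝ) 1)
    (k : ℕ) (hk : k < N)
    (hsum : ∑ i ∈ Finset.range (k + 1), (N.choose i : ℝ) * ε ^ i * (1 - ε) ^ (N - i) ≤ β) :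
    ENNReal.ofReal (1 - β) ≤
      (Measure.pi fun _ : Fin N => μ)
        {ω | μ {s : ℝ | ω (Tuple.sort ω ⟨N - k - 1, by omega⟩) < s} ≤ ENNReal.ofReal ε} := by
  classical
  obtain ⟨t, hioi, hici⟩ := exists_quantile μ hε
  have hiio : μ (Set.Iio t) = ENNReal.ofReal (1 - ε) := by
    have h := measure_compl (measurableSet_Ici (a := t)) (measure_ne_top μ _)
    rw [Set.compl_Ici, hici, measure_univ] at h
    rw [h]
    refine ENNReal.sub_eq_of_eq_add ENNReal.ofReal_ne_top ?_
    rw [← ENNReal.ofReal_add (by linarith [hε.2]) hε.1.le]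
    norm_num
  set P := Measure.pi fun _ : Fin N => μ with hP
  set A : Finset (Fin N) → Set (Fin N → ℝ) := fun T =>
    Set.univ.pi fun i => if i ∈ T then Set.Ici t else Set.Iio t with hA
  set 𝒯 : Finset (Finset (Fin N)) :=
    Finset.univ.powerset.filter (fun T => T.card ≤ k) with h𝒯
  set E : Set (Fin N → ℝ) := ⋃ T ∈ 𝒯, A T with hE
  have hAmeas : ∀ T, MeasurableSet (A T) := by
    intro T
    refine MeasurableSet.univ_pi fun i => ?_
    split
    · exact measurableSet_Ici
    · exact measurableSet_Iio
  have hEmeas : MeasurableSet E :=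
    Finset.measurableSet_biUnion _ fun T _ => hAmeas T
  have hAT : ∀ T : Finset (Fin N),
      P (A T) = ENNReal.ofReal (ε ^ T.card * (1 - ε) ^ (N - T.card)) := by
    intro T
    rw [hA]
    dsimp only
    rw [Measure.pi_pi]
    simp only [apply_ite μ, hici, hiio]
    rw [Finset.prod_ite, Finset.prod_const, Finset.prod_const]
    have h1 : Finset.univ.filter (fun i => i ∈ T) = T := by ext i; simp
    have h2 : Finset.univ.filter (fun i => ¬ i ∈ T) = Tᶜ := by ext i; simp
    rw [h1, h2, Finset.card_compl, Fintype.card_fin]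
    rw [← ENNReal.ofReal_pow hε.1.le, ← ENNReal.ofReal_pow (by linarith [hε.2]),
      ← ENNReal.ofReal_mul (pow_nonneg hε.1.le _)]
  have hrealsum : ∑ T ∈ 𝒯, ε ^ T.card * (1 - ε) ^ (N - T.card) ≤ β := by
    have hgroup : 𝒯 = (Finset.range (k + 1)).biUnion
        (fun j => Finset.powersetCard j (Finset.univ : Finset (Fin N))) := by
      ext T
      simp only [h𝒯, Finset.mem_filter, Finset.mem_powerset, Finset.mem_biUnion,
        Finset.mem_range, Finset.mem_powersetCard, Finset.subset_univ, true_and]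
      constructor
      · intro hc; exact ⟨T.card, by omega, rfl⟩
      · rintro ⟨j, hj, hTj⟩; omega
    rw [hgroup, Finset.sum_biUnion]
    · refine le_trans (le_of_eq ?_) hsum
      refine Finset.sum_congr rfl fun j hj => ?_
      have hc : ∀ T ∈ Finset.powersetCard j (Finset.univ : Finset (Fin N)),
          ε ^ T.card * (1 - ε) ^ (N - T.card) = ε ^ j * (1 - ε) ^ (N - j) := by
        intro T hT
        rw [(Finset.mem_powersetCard.mp hT).2]
      rw [Finset.sum_congr rfl hc, Finset.sum_const, Finset.card_powersetCard,
        Finset.card_fin, nsmul_eq_mul]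
      ring
    · intro i hi j hj hij
      refine Finset.disjoint_left.mpr fun T hTi hTj => ?_
      rw [Finset.mem_powersetCard] at hTi hTj
      exact hij (hTi.2 ▸ hTj.2.symm ▸ rfl)
  have hEbound : P E ≤ ENNReal.ofReal β := by
    calc P E ≤ ∑ T ∈ 𝒯, P (A T) := measure_biUnion_finset_le 𝒯 A
      _ = ∑ T ∈ 𝒯, ENNReal.ofReal (ε ^ T.card * (1 - ε) ^ (N - T.card)) :=
        Finset.sum_congr rfl fun T _ => hAT T
      _ = ENNReal.ofReal (∑ T ∈ 𝒯, ε ^ T.card * (1 - ε) ^ (N - T.card)) :=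
        (ENNReal.ofReal_sum_of_nonneg fun T _ =>
          mul_nonneg (pow_nonneg hε.1.le _) (pow_nonneg (by linarith [hε.2]) _)).symm
      _ ≤ ENNReal.ofReal β := ENNReal.ofReal_le_ofReal hrealsum
  have hsubset : Eᶜ ⊆
      {ω : Fin N → ℝ | μ {s : ℝ | ω (Tuple.sort ω ⟨N - k - 1, by omega⟩) < s} ≤
        ENNReal.ofReal ε} := by
    intro ω hω
    set T₀ := Finset.univ.filter (fun i => t ≤ ω i) with hT₀
    have hωA : ω ∈ A T₀ := by
      intro i _
      dsimp only [hA]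
      split <;> rename_i hmem
      · rw [hT₀, Finset.mem_filter] at hmem; exact hmem.2
      · rw [hT₀, Finset.mem_filter] at hmem
        push_neg at hmem
        exact hmem (Finset.mem_univ i)
    have hT₀notin : T₀ ∉ 𝒯 := fun hT => hω (Set.mem_biUnion hT hωA)
    have hcard : k + 1 ≤ T₀.card := by
      by_contra hc
      exact hT₀notin (by rw [h𝒯, Finset.mem_filter]
                         exact ⟨Finset.mem_powerset.mpr (Finset.subset_univ _), by omega⟩)
    have hts := sorted_ge hk ω t hcard
    show μ {s : ℝ | ω (Tuple.sort ω ⟨N - k - 1, by omega⟩) < s} ≤ ENNReal.ofReal ε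
    calc μ {s : ℝ | ω (Tuple.sort ω ⟨N - k - 1, by omega⟩) < s} ≤ μ (Set.Ioi t) :=
        measure_mono fun s hs => lt_of_le_of_lt hts hs
      _ = ENNReal.ofReal ε := hioi
  calc ENNReal.ofReal (1 - β) = 1 - ENNReal.ofReal β := by
        rw [← ENNReal.ofReal_one, ← ENNReal.ofReal_sub _ hβ.1.le]
    _ ≤ 1 - P E := tsub_le_tsub_left hEbound 1
    _ = P Eᶜ := (prob_compl_eq_one_sub hEmeas).symm
    _ ≤ _ := measure_mono hsubset
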